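/- For s > −1, the digamma function satisfies ψ(s + 1) = −γ + ∫_0^1 (1 − x^s)/(1 − x) dx, where γ is the Euler–Mascheroni constant. -/

import Mathlib

/-- The digamma function `ψ = Γ'/Γ`. -/
noncomputable def digamma (x : ℝ) : ℝ := deriv Real.Gamma x / Real.Gamma x

section DigammaDirichletAux

open Real MeasureTheory Set Filter Topology intervalIntegral

lemma tendsto_integrand_one (s : ℝ) :
    Tendsto (fun x : ℝ => (1 - x ^ s) / (1 - x)) (𝓝[≠] 1) (𝓝 s) := by
  have h : HasDerivAt (fun x : ℝ => x ^ s) (s * (1:ℝ) ^ (s - 1)) 1 :=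
    Real.hasDerivAt_rpow_const (Or.inl one_ne_zero)
  have h2 := hasDerivAt_iff_tendsto_slope.mp h
  simp only [Real.one_rpow, mul_one] at h2
  refine h2.congr' ?_
  filter_upwards [self_mem_nhdsWithin] with x hx
  have hx' : (x:ℝ) ≠ 1 := hx
  rw [slope_def_field, Real.one_rpow,
    div_eq_div_iff (sub_ne_zero.mpr hx') (sub_ne_zero.mpr (Ne.symm hx'))]
  ring

noncomputable def Fext (s : ℝ) : ℝ → ℝ := fun x => if x = 1 then s else (1 - x ^ s) / (1 - x)

lemma contOn_Fext (s : ℝ) : ContinuousOn (Fext s) (Icc (1/2 : ℝ) 1) := by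
  intro x hx
  rcases eq_or_ne x 1 with rfl | hx1
  · -- continuity at 1
    apply ContinuousAt.continuousWithinAt
    rw [ContinuousAt, ← nhdsNE_sup_pure 1]
    rw [tendsto_sup]
    constructor
    · have := tendsto_integrand_one s
      have heq : (fun x => (1 - x ^ s) / (1 - x)) =ᶠ[𝓝[≠] (1:ℝ)] Fext s := by
        filter_upwards [self_mem_nhdsWithin] with y hy
        have : y ≠ 1 := hy
        simp [Fext, this]
      simpa [Fext] using this.congr' heq
    · have h0 : Fext s 1 = s := by simp [Fext]
      exact h0 ▸ tendsto_pure_nhds (Fext s) 1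
  · apply ContinuousAt.continuousWithinAt
    have hxlt : x < 1 := lt_of_le_of_ne hx.2 hx1
    have hxpos : 0 < x := by have := hx.1; linarith
    have hcont : ContinuousAt (fun y : ℝ => (1 - y ^ s) / (1 - y)) x := by
      apply ContinuousAt.div
      · exact continuousAt_const.sub (Real.continuousAt_rpow_const x s (Or.inl hxpos.ne'))
      · fun_prop
      · intro h; apply hx1; linarith [sub_eq_zero.mp h]
    refine hcont.congr ?_
    filter_upwards [eventually_lt_nhds hxlt] with y hy
    simp [Fext, hy.ne]

lemma meas_integrand (s : ℝ) : Measurable (fun x : ℝ => (1 - x ^ s) / (1 - x)) := by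
  fun_prop

lemma integrableA (s : ℝ) (hs : -1 < s) :
    IntervalIntegrable (fun x : ℝ => (1 - x ^ s) / (1 - x)) volume 0 (1/2) := by
  rw [intervalIntegrable_iff_integrableOn_Ioc_of_le (by norm_num)]
  have hg : IntegrableOn (fun x : ℝ => 2 + 2 * x ^ s) (Ioc (0:ℝ) (1/2)) volume := by
    apply Integrable.add
    · exact (integrableOn_const_iff (C := (2:ℝ))).mpr (Or.inr (by simp))
    · have := (intervalIntegrable_rpow' hs (a := 0) (b := 1/2))
      rw [intervalIntegrable_iff_integrableOn_Ioc_of_le (by norm_num)] at this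
      exact this.const_mul 2
  apply hg.mono' ((meas_integrand s).aestronglyMeasurable)
  filter_upwards [ae_restrict_mem measurableSet_Ioc] with x hx
  have hx0 : 0 < x := hx.1
  have hx2 : x ≤ 1/2 := hx.2
  have hxs : 0 ≤ x ^ s := Real.rpow_nonneg hx0.le s
  have h1x : (1:ℝ)/2 ≤ 1 - x := by linarith
  rw [Real.norm_eq_abs, abs_div, abs_of_pos (by linarith : (0:ℝ) < 1 - x)]
  rw [div_le_iff₀ (by linarith : (0:ℝ) < 1 - x)]
  have habs : |1 - x ^ s| ≤ 1 + x ^ s := by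
    rw [abs_le]; constructor <;> nlinarith
  calc |1 - x ^ s| ≤ 1 + x ^ s := habs
    _ = (2 + 2 * x ^ s) * (1/2) := by ring
    _ ≤ (2 + 2 * x ^ s) * (1 - x) := by
        apply mul_le_mul_of_nonneg_left h1x (by linarith)

lemma integrableB (s : ℝ) :
    IntervalIntegrable (fun x : ℝ => (1 - x ^ s) / (1 - x)) volume (1/2) 1 := by
  have hF : IntervalIntegrable (Fext s) volume (1/2) 1 := by
    apply ContinuousOn.intervalIntegrable
    rw [uIcc_of_le (by norm_num)]
    exact contOn_Fext s
  rw [intervalIntegrable_iff_integrableOn_Ioc_of_le (by norm_num)] at hF ⊢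
  apply hF.congr_fun_ae
  have h1 : ∀ᵐ x : ℝ ∂(volume.restrict (Ioc (1/2 : ℝ) 1)), x ≠ 1 := by
    refine ae_restrict_of_ae ?_
    have : volume ({(1:ℝ)} : Set ℝ) = 0 := Real.volume_singleton
    simpa using measure_eq_zero_iff_ae_notMem.mp this
  filter_upwards [h1] with x hx
  simp [Fext, hx]

lemma integrable_integrand (s : ℝ) (hs : -1 < s) :
    IntervalIntegrable (fun x : ℝ => (1 - x ^ s) / (1 - x)) volume 0 1 :=
  (integrableA s hs).trans (integrableB s)

lemma ae_ne_point (c : ℝ) : ∀ᵐ x : ℝ, x ≠ c := by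
  have : volume ({c} : Set ℝ) = 0 := Real.volume_singleton
  simpa using measure_eq_zero_iff_ae_notMem.mp this

noncomputable def Ifun (s : ℝ) : ℝ := ∫ x in (0:ℝ)..1, (1 - x ^ s) / (1 - x)

lemma Ifun_zero : Ifun 0 = 0 := by
  simp [Ifun, Real.rpow_zero]

lemma Ifun_succ (s : ℝ) (hs : -1 < s) : Ifun (s + 1) = Ifun s + 1 / (s + 1) := by
  have h1 := integrable_integrand s hs
  have h2 := integrable_integrand (s + 1) (by linarith)
  have key : Ifun (s + 1) - Ifun s = ∫ x in (0:ℝ)..1, x ^ s := by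
    rw [Ifun, Ifun, ← intervalIntegral.integral_sub h2 h1]
    apply intervalIntegral.integral_congr_ae
    filter_upwards [ae_ne_point 1] with x hx1 hx
    rw [uIoc_of_le (by norm_num)] at hx
    have hx0 : 0 < x := hx.1
    have hxlt : x < 1 := lt_of_le_of_ne hx.2 hx1
    have hxne : (1:ℝ) - x ≠ 0 := by intro h; apply hx1; linarith
    have hpow : x ^ (s + 1) = x ^ s * x := Real.rpow_add_one hx0.ne' s
    field_simp [hpow]
    ring_nf; rw [add_comm 1 s, hpow]; ring
  have hval : (∫ x in (0:ℝ)..1, x ^ s) = 1 / (s + 1) := by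
    rw [integral_rpow (Or.inl hs)]
    rw [Real.one_rpow, Real.zero_rpow (by linarith : s + 1 ≠ 0)]
    ring
  linarith [key, hval]

lemma Ifun_mono {s t : ℝ} (hs : -1 < s) (hst : s ≤ t) : Ifun s ≤ Ifun t := by
  apply intervalIntegral.integral_mono_ae_restrict (by norm_num : (0:ℝ) ≤ 1)
    (integrable_integrand s hs) (integrable_integrand t (by linarith))
  filter_upwards [ae_restrict_mem measurableSet_Icc, ae_restrict_of_ae (ae_ne_point 0),
    ae_restrict_of_ae (ae_ne_point 1)] with x hx hx0 hx1
  have hxpos : 0 < x := lt_of_le_of_ne hx.1 (Ne.symm hx0)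
  have hxlt : x < 1 := lt_of_le_of_ne hx.2 hx1
  have hpow : x ^ t ≤ x ^ s := Real.rpow_le_rpow_of_exponent_ge hxpos hxlt.le hst
  gcongr

lemma Gamma_diffAt {x : ℝ} (hx : 0 < x) : DifferentiableAt ℝ Real.Gamma x :=
  Real.differentiableAt_Gamma fun m =>
    ne_of_gt (lt_of_le_of_lt (neg_nonpos.mpr m.cast_nonneg) hx)

lemma logGamma_diffAt {x : ℝ} (hx : 0 < x) :
    DifferentiableAt ℝ (Real.log ∘ Real.Gamma) x :=
  (Gamma_diffAt hx).log (Real.Gamma_pos_of_pos hx).ne'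

lemma digamma_eq_deriv_log {x : ℝ} (hx : 0 < x) :
    digamma x = deriv (Real.log ∘ Real.Gamma) x := by
  rw [digamma, Function.comp_def,
    deriv.log (Gamma_diffAt hx) (Real.Gamma_pos_of_pos hx).ne']

lemma deriv_logGamma_mono {x y : ℝ} (hx : 0 < x) (hxy : x ≤ y) :
    deriv (Real.log ∘ Real.Gamma) x ≤ deriv (Real.log ∘ Real.Gamma) y :=
  Real.convexOn_log_Gamma.monotoneOn_deriv (fun z hz => logGamma_diffAt hz)
    (Set.mem_Ioi.mpr hx) (Set.mem_Ioi.mpr (lt_of_lt_of_le hx hxy)) hxy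

lemma deriv_logGamma_rec (x : ℝ) (hx : 0 < x) :
    deriv (Real.log ∘ Real.Gamma) (x + 1) = deriv (Real.log ∘ Real.Gamma) x + 1 / x := by
  have h_rec : ∀ y : ℝ, 0 < y →
      (Real.log ∘ Real.Gamma) (y + 1) = (Real.log ∘ Real.Gamma) y + Real.log y := by
    intro y hy
    simp only [Function.comp_apply, Real.Gamma_add_one hy.ne',
      Real.log_mul hy.ne' (Real.Gamma_pos_of_pos hy).ne', add_comm]
  rw [← deriv_comp_add_const, one_div, ← Real.deriv_log,
    ← deriv_add (logGamma_diffAt hx) (Real.differentiableAt_log hx.ne')]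
  apply Filter.EventuallyEq.deriv_eq
  filter_upwards [eventually_gt_nhds hx] using h_rec

lemma deriv_logGamma_one : deriv (Real.log ∘ Real.Gamma) 1 = -Real.eulerMascheroniConstant := by
  rw [← digamma_eq_deriv_log one_pos, digamma, Real.hasDerivAt_Gamma_one.deriv, Real.Gamma_one,
    div_one]

noncomputable def Dfun (s : ℝ) : ℝ :=
  deriv (Real.log ∘ Real.Gamma) (s + 1) + Real.eulerMascheroniConstant

lemma Dfun_zero : Dfun 0 = 0 := by
  simp [Dfun, deriv_logGamma_one]

lemma Dfun_succ (s : ℝ) (hs : -1 < s) : Dfun (s + 1) = Dfun s + 1 / (s + 1) := by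
  have : (0:ℝ) < s + 1 := by linarith
  rw [Dfun, Dfun, show s + 1 + 1 = (s + 1) + 1 by ring, deriv_logGamma_rec (s + 1) this]
  ring

lemma Dfun_mono {s t : ℝ} (hs : -1 < s) (hst : s ≤ t) : Dfun s ≤ Dfun t := by
  have := deriv_logGamma_mono (by linarith : (0:ℝ) < s + 1) (by linarith : s + 1 ≤ t + 1)
  simp only [Dfun]
  linarith

noncomputable def gfun (s : ℝ) : ℝ := Dfun s - Ifun s

lemma gfun_succ (s : ℝ) (hs : -1 < s) : gfun (s + 1) = gfun s := by
  rw [gfun, gfun, Dfun_succ s hs, Ifun_succ s hs]; ring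

lemma gfun_shift (s : ℝ) (hs : -1 < s) (m : ℕ) : gfun (s + m) = gfun s := by
  induction m with
  | zero => simp
  | succ n ih =>
    have h1 : s + ((n : ℕ) + 1 : ℕ) = (s + n) + 1 := by push_cast; ring
    have h2 : -1 < s + n := by
      have : (0:ℝ) ≤ n := Nat.cast_nonneg n
      linarith
    rw [h1, gfun_succ _ h2, ih]

lemma gfun_nat (n : ℕ) : gfun n = 0 := by
  have := gfun_shift 0 (by norm_num) n
  rw [zero_add] at this
  rw [this, gfun, Dfun_zero, Ifun_zero, sub_zero]

lemma gfun_eq_zero (s : ℝ) (hs : -1 < s) : gfun s = 0 := by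
  have key : ∀ m : ℕ, 1 ≤ m → |gfun s| ≤ 1 / m := by
    intro m hm
    have hm1 : (1:ℝ) ≤ m := by exact_mod_cast hm
    set N := Nat.floor (s + m) with hN
    have hsm0 : (0:ℝ) ≤ s + m := by linarith
    have hge : (N:ℝ) ≤ s + m := Nat.floor_le hsm0
    have hlt : s + m < N + 1 := Nat.lt_floor_add_one _
    have hNpos : (-1:ℝ) < N := by
      have : (0:ℝ) ≤ N := Nat.cast_nonneg N
      linarith
    have hm1N : m ≤ N + 1 := by
      have : m - 1 ≤ N := Nat.le_floor (by push_cast [hm]; linarith)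
      omega
    have hgN : gfun N = 0 := gfun_nat N
    have hgN1 : gfun ((N:ℝ) + 1) = 0 := by
      have := gfun_nat (N + 1)
      push_cast at this
      exact this
    have hIrec : Ifun ((N:ℝ) + 1) = Ifun N + 1 / (N + 1) := Ifun_succ N hNpos
    have hD1 : Dfun (s + m) ≤ Dfun ((N:ℝ) + 1) := Dfun_mono (by linarith) hlt.le
    have hD2 : Dfun N ≤ Dfun (s + m) := Dfun_mono hNpos hge
    have hI1 : Ifun (s + m) ≤ Ifun ((N:ℝ) + 1) := Ifun_mono (by linarith) hlt.le
    have hI2 : Ifun N ≤ Ifun (s + m) := Ifun_mono hNpos hge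
    have hDN : Dfun N = Ifun N := by have := gfun_nat N; rw [gfun] at this; linarith
    have hDN1 : Dfun ((N:ℝ) + 1) = Ifun ((N:ℝ) + 1) := by
      rw [gfun] at hgN1; linarith
    have hshift : gfun (s + m) = gfun s := gfun_shift s hs m
    have hub : gfun s ≤ 1 / (N + 1) := by
      rw [← hshift, gfun]
      have : Dfun (s + m) - Ifun (s + m) ≤ Ifun ((N:ℝ) + 1) - Ifun N := by
        rw [← hDN1]; linarith
      rw [hIrec] at this; linarith
    have hlb : -(1 / ((N:ℝ) + 1)) ≤ gfun s := by
      rw [← hshift, gfun]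
      have : Ifun N - Ifun ((N:ℝ) + 1) ≤ Dfun (s + m) - Ifun (s + m) := by
        rw [← hDN]; linarith
      rw [hIrec] at this; linarith
    have habs : |gfun s| ≤ 1 / ((N:ℝ) + 1) := abs_le.mpr ⟨hlb, hub⟩
    refine habs.trans ?_
    apply one_div_le_one_div_of_le (by linarith)
    exact_mod_cast hm1N
  have htend : Filter.Tendsto (fun m : ℕ => 1 / (m : ℝ)) Filter.atTop (nhds 0) :=
    tendsto_one_div_atTop_nhds_zero_nat
  have h0 : |gfun s| ≤ 0 := by
    apply ge_of_tendsto htend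
    filter_upwards [Filter.eventually_ge_atTop 1] with m hm using key m hm
  have := abs_nonneg (gfun s)
  have : |gfun s| = 0 := le_antisymm h0 (abs_nonneg _)
  exact abs_eq_zero.mp this

end DigammaDirichletAux

/-- Dirichlet's formula: for `s > −1`,
`ψ(s + 1) = −γ + ∫_0^1 (1 − x^s)/(1 − x) dx`. -/
theorem digamma_dirichlet_formula (s : ℝ) (hs : -1 < s) :
    digamma (s + 1) =
      -Real.eulerMascheroniConstant + ∫ x in (0 : ℝ)..1, (1 - x ^ s) / (1 - x) := by
  have h := gfun_eq_zero s hs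
  rw [gfun, Dfun] at h
  rw [digamma_eq_deriv_log (by linarith : (0:ℝ) < s + 1)]
  have h2 : Ifun s = ∫ x in (0 : ℝ)..1, (1 - x ^ s) / (1 - x) := rfl
  linarith
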